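/- arXiv:1902.02080 — 3 statements merged into one kernel-verified Lean document; each statement's English description precedes it below -/
import Mathlib

section
/- Let k ∈ ℕ, A ∈ ℝ^{k×k} symmetric positive semidefinite, and Γ = diag(γ₁,...,γ_k) with γ_i ∈ (0,1). If ‖ΓAΓ‖_{2→2} ≤ 1, then the only solution x ∈ (-1,1)^k of the system of equations Γ²·artanh(x) = Γ²AΓ²x (where artanh is applied componentwise) is x = 0. -/
noncomputable def artanh (x : ℝ) : ℝ := (1/2) * Real.log ((1+x)/(1-x))

lemma artanh_deriv_aux {t : ℝ} (ht0 : 0 < t) (ht1 : t < 1) :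
    t < artanh t := by
  set g : ℝ → ℝ := fun s => (1/2) * (Real.log (1+s) - Real.log (1-s)) - s with hg
  have hderiv : ∀ s ∈ Set.Ioo (-1:ℝ) 1,
      HasDerivAt g ((1/2) * (1/(1+s) - (-1)/(1-s)) - 1) s := by
    intro s hs
    have h1 : (0:ℝ) < 1 + s := by linarith [hs.1]
    have h2 : (0:ℝ) < 1 - s := by linarith [hs.2]
    have d1 : HasDerivAt (fun s : ℝ => Real.log (1+s)) (1/(1+s)) s := by
      have : HasDerivAt (fun s : ℝ => 1+s) 1 s := by
        simpa using (hasDerivAt_id s).const_add 1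
      simpa using this.log h1.ne'
    have d2 : HasDerivAt (fun s : ℝ => Real.log (1-s)) ((-1)/(1-s)) s := by
      have : HasDerivAt (fun s : ℝ => 1-s) (-1) s := by
        exact (hasDerivAt_id s).const_sub 1
      simpa using this.log h2.ne'
    exact ((d1.sub d2).const_mul (1/2)).sub (hasDerivAt_id s)
  have hmono : StrictMonoOn g (Set.Ico (0:ℝ) 1) := by
    apply strictMonoOn_of_deriv_pos (convex_Ico 0 1)
    · intro s hs
      exact (hderiv s ⟨by linarith [hs.1], hs.2⟩).continuousAt.continuousWithinAt
    · intro s hs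
      rw [interior_Ico] at hs
      have h1 : (0:ℝ) < 1 + s := by linarith [hs.1]
      have h2 : (0:ℝ) < 1 - s := by linarith [hs.2]
      rw [(hderiv s ⟨by linarith [hs.1], hs.2⟩).deriv]
      have hp : (0:ℝ) < (1+s)*(1-s) := mul_pos h1 h2
      have e1 : (1:ℝ)/(1+s) - (-1)/(1-s) = 2/((1+s)*(1-s)) := by field_simp; ring
      rw [e1, show (1:ℝ)/2 * (2/((1+s)*(1-s))) = 1/((1+s)*(1-s)) by ring]
      rw [sub_pos, lt_div_iff₀ hp, one_mul]
      nlinarith [hs.1]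
  have h0 : g 0 = 0 := by simp [hg]
  have := hmono (Set.mem_Ico.mpr ⟨le_refl 0, by norm_num⟩) (Set.mem_Ico.mpr ⟨ht0.le, ht1⟩) ht0
  rw [h0] at this
  have h1 : (0:ℝ) < 1 + t := by linarith
  have h2 : (0:ℝ) < 1 - t := by linarith
  have : 0 < (1/2) * (Real.log (1+t) - Real.log (1-t)) - t := this
  rw [artanh, Real.log_div h1.ne' h2.ne']
  linarith

lemma artanh_sq_le {t : ℝ} (ht : t ∈ Set.Ioo (-1:ℝ) 1) : t * t ≤ t * artanh t := by
  rcases lt_trichotomy t 0 with h | h | h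
  · have hodd : artanh t = - artanh (-t) := by
      rw [artanh, artanh, show (1 + -t) = (1 - t) by ring, show (1 - -t) = (1 + t) by ring,
        show (1-t)/(1+t) = ((1+t)/(1-t))⁻¹ by rw [inv_div], Real.log_inv]
      ring
    have := artanh_deriv_aux (t := -t) (by linarith) (by linarith [ht.1])
    nlinarith
  · simp [h]
  · have := artanh_deriv_aux h ht.2
    nlinarith

lemma artanh_sq_eq {t : ℝ} (ht : t ∈ Set.Ioo (-1:ℝ) 1) (h : t * artanh t = t * t) :
    t = 0 := by
  by_contra hne
  rcases lt_trichotomy t 0 with hlt | h0 | hgt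
  · have hodd : artanh t = - artanh (-t) := by
      rw [artanh, artanh, show (1 + -t) = (1 - t) by ring, show (1 - -t) = (1 + t) by ring,
        show (1-t)/(1+t) = ((1+t)/(1-t))⁻¹ by rw [inv_div], Real.log_inv]
      ring
    have := artanh_deriv_aux (t := -t) (by linarith) (by linarith [ht.1])
    nlinarith
  · exact hne h0
  · have := artanh_deriv_aux hgt ht.2
    nlinarith

noncomputable def Lstar (x : ℝ) : ℝ :=
  (1/2)*(1+x)*Real.log (1+x) + (1/2)*(1-x)*Real.log (1-x)

noncomputable def opNorm2 {k : ℕ} (M : Matrix (Fin k) (Fin k) ℝ) : ℝ :=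
  ‖Matrix.toEuclideanCLM (𝕜 := ℝ) M‖

open Matrix in
theorem stmt5 (k : ℕ) (A : Matrix (Fin k) (Fin k) ℝ) (hA : A.IsSymm)
    (hpsd : A.PosSemidef) (γ : Fin k → ℝ) (hγ : ∀ i, γ i ∈ Set.Ioo (0 : ℝ) 1)
    (Γ : Matrix (Fin k) (Fin k) ℝ) (hΓ : Γ = Matrix.diagonal γ)
    (hnorm : opNorm2 (Γ * A * Γ) ≤ 1)
    (x : Fin k → ℝ) (hx : ∀ i, x i ∈ Set.Ioo (-1 : ℝ) 1)
    (hcrit : (Γ * Γ).mulVec (fun i => artanh (x i)) = (Γ * Γ * A * Γ * Γ).mulVec x) :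
    x = 0 := by
  -- the weighted vectors
  set u : Fin k → ℝ := fun i => γ i * x i with hu
  set y : Fin k → ℝ := fun i => γ i * γ i * x i with hy
  have hΓu : Γ.mulVec u = y := by
    funext i
    simp [hΓ, Matrix.mulVec_diagonal, hu, hy]
    ring
  -- componentwise equation: artanh (x i) = (A.mulVec y) i
  have heq : ∀ i, artanh (x i) = A.mulVec y i := by
    intro i
    have h1 := congrFun hcrit i
    have hΓΓ : Γ * Γ = Matrix.diagonal (fun i => γ i * γ i) := by
      rw [hΓ, Matrix.diagonal_mul_diagonal]
    have hAy : (Γ * Γ * A * Γ * Γ).mulVec x = (Γ * Γ).mulVec (A.mulVec y) := by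
      have hxy : (Γ * Γ).mulVec x = y := by
        funext j; simp [hΓΓ, Matrix.mulVec_diagonal, hy]
      have hassoc : (Γ * Γ).mulVec (A.mulVec ((Γ * Γ).mulVec x)) = (Γ * Γ * A * Γ * Γ).mulVec x := by
        rw [Matrix.mulVec_mulVec, Matrix.mulVec_mulVec, ← mul_assoc]
      rw [← hassoc, hxy]
    rw [hAy] at h1
    simp only [hΓΓ, Matrix.mulVec_diagonal] at h1
    have hγi := (hγ i).1
    exact mul_left_cancel₀ (by positivity) h1
  -- the operator norm bound
  set M := Γ * A * Γ with hM
  set u' : EuclideanSpace ℝ (Fin k) := (WithLp.equiv 2 (Fin k → ℝ)).symm u with hu'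
  have hTu : (Matrix.toEuclideanCLM (𝕜 := ℝ) M) u' = (WithLp.equiv 2 (Fin k → ℝ)).symm (M.mulVec u) := by
    rw [hu']; exact Matrix.toEuclideanCLM_toLp M u
  have hinner : inner ℝ u' ((Matrix.toEuclideanCLM (𝕜 := ℝ) M) u') = u ⬝ᵥ M.mulVec u := by
    rw [hTu]
    simp [hu', PiLp.inner_apply, RCLike.inner_apply, dotProduct, WithLp.equiv_symm_apply, mul_comm]
  have hnormu : (‖u'‖ : ℝ)^2 = ∑ i, γ i^2 * x i^2 := by
    rw [EuclideanSpace.norm_sq_eq]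
    simp only [hu', WithLp.equiv_symm_apply, PiLp.toLp_apply, hu, Real.norm_eq_abs, sq_abs]
    apply Finset.sum_congr rfl
    intro i _
    ring
  have hbound : u ⬝ᵥ M.mulVec u ≤ ∑ i, γ i^2 * x i^2 := by
    rw [← hinner, ← hnormu]
    calc inner ℝ u' ((Matrix.toEuclideanCLM (𝕜 := ℝ) M) u')
        ≤ ‖u'‖ * ‖(Matrix.toEuclideanCLM (𝕜 := ℝ) M) u'‖ := real_inner_le_norm _ _
      _ ≤ ‖u'‖ * (opNorm2 M * ‖u'‖) := by
          apply mul_le_mul_of_nonneg_left (ContinuousLinearMap.le_opNorm _ _) (norm_nonneg _)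
      _ = opNorm2 M * ‖u'‖^2 := by ring
      _ ≤ 1 * ‖u'‖^2 := by
          apply mul_le_mul_of_nonneg_right hnorm (by positivity)
      _ = ‖u'‖^2 := one_mul _
  -- the quadratic form identity
  have hsum : ∑ i, γ i^2 * (x i * artanh (x i)) = u ⬝ᵥ M.mulVec u := by
    have h2 : M.mulVec u = Γ.mulVec (A.mulVec y) := by
      rw [hM, mul_assoc, ← Matrix.mulVec_mulVec, ← Matrix.mulVec_mulVec, hΓu]
    rw [h2]
    simp only [dotProduct, hΓ, Matrix.mulVec_diagonal]
    apply Finset.sum_congr rfl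
    intro i _
    rw [← heq i, hu]
    ring
  -- conclude
  have hterm : ∀ i ∈ Finset.univ, γ i^2 * (x i * x i) ≤ γ i^2 * (x i * artanh (x i)) := by
    intro i _
    have := artanh_sq_le (hx i)
    nlinarith [sq_nonneg (γ i)]
  have hle : ∑ i, γ i^2 * (x i * x i) ≤ ∑ i, γ i^2 * (x i * artanh (x i)) :=
    Finset.sum_le_sum hterm
  have hge : ∑ i, γ i^2 * (x i * artanh (x i)) ≤ ∑ i, γ i^2 * (x i * x i) := by
    rw [hsum]
    calc u ⬝ᵥ M.mulVec u ≤ ∑ i, γ i^2 * x i^2 := hbound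
      _ = ∑ i, γ i^2 * (x i * x i) := by apply Finset.sum_congr rfl; intro i _; ring
  have heqsum : ∑ i, γ i^2 * (x i * x i) = ∑ i, γ i^2 * (x i * artanh (x i)) :=
    le_antisymm hle hge
  have hall := (Finset.sum_eq_sum_iff_of_le hterm).mp heqsum
  funext i
  have hi := (hall i (Finset.mem_univ i)).symm
  have hγi := (hγ i).1
  have : x i * artanh (x i) = x i * x i := mul_left_cancel₀ (by positivity) hi
  simpa using artanh_sq_eq (hx i) this
end

section
/- For β > 1, the equation tanh(βm) = m has exactly one solution m* in (0,1), and it is a fixed point with tanh'(βm*)·β = β(1-(m*)²) < 1, i.e. β < 1/(1-(m*)²). -/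
open Real hiding artanh artanh_zero

lemma my_tanh_eq (x : ℝ) : Real.tanh x = (Real.exp (2*x) - 1)/(Real.exp (2*x) + 1) := by
  rw [Real.tanh_eq_sinh_div_cosh, Real.sinh_eq, Real.cosh_eq]
  have h1 : Real.exp (2*x) = Real.exp x * Real.exp x := by
    rw [← Real.exp_add]; ring_nf
  have h2 : Real.exp (-x) = (Real.exp x)⁻¹ := Real.exp_neg x
  have h3 : Real.exp x ≠ 0 := (Real.exp_pos x).ne'
  have h4 : Real.exp x * Real.exp x + 1 ≠ 0 := by positivity
  rw [h1, h2]
  field_simp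

lemma my_tanh_inj : Function.Injective Real.tanh := by
  intro a b hab
  rw [my_tanh_eq, my_tanh_eq] at hab
  have ha : (0:ℝ) < Real.exp (2*a) + 1 := by positivity
  have hb : (0:ℝ) < Real.exp (2*b) + 1 := by positivity
  have : Real.exp (2*a) = Real.exp (2*b) := by
    field_simp at hab
    nlinarith [hab]
  have := Real.exp_injective this
  linarith

lemma my_tanh_lt_one (x : ℝ) : Real.tanh x < 1 := by
  rw [my_tanh_eq]
  have h : (0:ℝ) < Real.exp (2*x) + 1 := by positivity
  rw [div_lt_one h]; linarith

lemma my_tanh_pos {x : ℝ} (hx : 0 < x) : 0 < Real.tanh x := by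
  rw [my_tanh_eq]
  have h : (1:ℝ) < Real.exp (2*x) := by
    rw [← Real.exp_zero]; exact Real.exp_lt_exp.2 (by linarith)
  apply div_pos <;> linarith

lemma my_tanh_artanh {x : ℝ} (h1 : -1 < x) (h2 : x < 1) : Real.tanh (artanh x) = x := by
  have hp : (0:ℝ) < (1+x)/(1-x) := by
    apply div_pos <;> linarith
  have he : Real.exp (2 * artanh x) = (1+x)/(1-x) := by
    unfold artanh
    rw [show 2 * ((1/2) * Real.log ((1+x)/(1-x))) = Real.log ((1+x)/(1-x)) by ring,
      Real.exp_log hp]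
  rw [my_tanh_eq, he]
  have h3 : (1:ℝ) - x ≠ 0 := by linarith
  have h4 : (1+x)/(1-x) + 1 ≠ 0 := by positivity
  field_simp
  ring

lemma my_artanh_tanh (y : ℝ) : artanh (Real.tanh y) = y := by
  have h1 : -1 < Real.tanh y := by
    have := my_tanh_lt_one (-y); rw [Real.tanh_neg] at this; linarith
  have h2 := my_tanh_lt_one y
  exact my_tanh_inj (my_tanh_artanh h1 h2)

lemma artanh_eq' {x : ℝ} (h1 : -1 < x) (h2 : x < 1) :
    artanh x = (1/2) * (Real.log (1+x) - Real.log (1-x)) := by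
  unfold artanh
  rw [Real.log_div (by linarith) (by linarith)]

lemma hasDerivAt_artanh {x : ℝ} (h1 : -1 < x) (h2 : x < 1) :
    HasDerivAt artanh (1/(1-x^2)) x := by
  have hx1 : (0:ℝ) < 1 + x := by linarith
  have hx2 : (0:ℝ) < 1 - x := by linarith
  have d1 : HasDerivAt (fun y : ℝ => Real.log (1+y)) (1/(1+x)) x := by
    have := (Real.hasDerivAt_log hx1.ne').comp x
      ((hasDerivAt_id x).const_add 1)
    simpa [one_div, Function.comp_def] using this
  have d2 : HasDerivAt (fun y : ℝ => Real.log (1-y)) (-(1/(1-x))) x := by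
    have := (Real.hasDerivAt_log hx2.ne').comp x
      ((hasDerivAt_id x).neg.const_add 1)
    simpa [one_div, Function.comp_def] using this
  have d : HasDerivAt (fun y : ℝ => (1/2) * (Real.log (1+y) - Real.log (1-y)))
      ((1/2) * (1/(1+x) - -(1/(1-x)))) x := ((d1.sub d2).const_mul (1/2))
  have hx3 : (1:ℝ) - x^2 ≠ 0 := by nlinarith
  have heq : (1/2) * (1/(1+x) - -(1/(1-x))) = 1/(1-x^2) := by
    field_simp
    ring
  rw [heq] at d
  apply d.congr_of_eventuallyEq
  have hmem : Set.Ioo (-1:ℝ) 1 ∈ nhds x := Ioo_mem_nhds h1 h2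
  filter_upwards [hmem] with y hy
  exact artanh_eq' hy.1 hy.2

lemma artanh_zero : artanh 0 = 0 := by
  unfold artanh; norm_num

/-- MVT: slope of artanh equals 1/(1-c²) for some c -/
lemma artanh_slope {a b : ℝ} (hab : a < b) (ha : -1 < a) (hb : b < 1) :
    ∃ c ∈ Set.Ioo a b, 1/(1-c^2) = (artanh b - artanh a)/(b - a) := by
  apply exists_hasDerivAt_eq_slope artanh (fun x => 1/(1-x^2)) hab
  · intro x hx
    exact (hasDerivAt_artanh (by linarith [hx.1]) (by linarith [hx.2])).continuousAt.continuousWithinAt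
  · intro x hx
    exact hasDerivAt_artanh (by linarith [hx.1]) (by linarith [hx.2])

lemma fixed_iff {β m : ℝ} (h1 : -1 < m) (h2 : m < 1) :
    Real.tanh (β * m) = m ↔ β * m = artanh m := by
  constructor
  · intro h
    exact my_tanh_inj (by rw [h, my_tanh_artanh h1 h2])
  · intro h
    rw [h]; exact my_tanh_artanh h1 h2

lemma slope_eq_beta {β m : ℝ} (hm : m ∈ Set.Ioo (0:ℝ) 1) (hfix : β * m = artanh m) :
    ∃ c ∈ Set.Ioo 0 m, 1/(1-c^2) = β := by
  obtain ⟨c, hc, hslope⟩ := artanh_slope hm.1 (by linarith) hm.2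
  refine ⟨c, hc, ?_⟩
  rw [hslope, artanh_zero, ← hfix, sub_zero, sub_zero, mul_div_assoc,
    div_self hm.1.ne', mul_one]

theorem stmt8 (β : ℝ) (hβ : 1 < β) :
    (∃! m : ℝ, m ∈ Set.Ioo (0 : ℝ) 1 ∧ Real.tanh (β * m) = m) ∧
    ∀ m ∈ Set.Ioo (0 : ℝ) 1, Real.tanh (β * m) = m → β * (1 - m ^ 2) < 1 := by
  have hβ0 : (0:ℝ) < β := by linarith
  -- stability
  have stab : ∀ m ∈ Set.Ioo (0 : ℝ) 1, Real.tanh (β * m) = m → β * (1 - m ^ 2) < 1 := by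
    intro m hm hfix
    have hfix' : β * m = artanh m := (fixed_iff (by linarith [hm.1]) hm.2).1 hfix
    obtain ⟨c, hc, hcβ⟩ := slope_eq_beta hm hfix'
    have hc2 : 1 - m^2 < 1 - c^2 := by nlinarith [hc.1, hc.2, hm.2]
    have hcpos : (0:ℝ) < 1 - c^2 := by nlinarith [hc.1, hc.2, hm.2]
    rw [← hcβ]
    rw [div_mul_eq_mul_div, one_mul, div_lt_one hcpos]
    exact hc2
  refine ⟨?_, stab⟩
  -- existence
  have hm0 : Real.tanh β ∈ Set.Ioo (0:ℝ) 1 := ⟨my_tanh_pos hβ0, my_tanh_lt_one β⟩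
  set m₀ := Real.tanh β with hm₀def
  set a := min ((β-1)/(2*β-1)) (m₀/2) with hadef
  have h2β : (0:ℝ) < 2*β - 1 := by linarith
  have ha0 : 0 < a := lt_min (div_pos (by linarith) h2β) (by linarith [hm0.1])
  have ham : a < m₀ := lt_of_le_of_lt (min_le_right _ _) (by linarith [hm0.1])
  have ha1 : a < 1/2 := by
    calc a ≤ (β-1)/(2*β-1) := min_le_left _ _
      _ < 1/2 := by rw [div_lt_div_iff₀ h2β (by norm_num)]; linarith
  -- h a < 0 where h x = artanh x - β x
  have hha : artanh a - β * a < 0 := by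
    have h1a : (0:ℝ) < 1 + a := by linarith
    have h2a : (0:ℝ) < 1 - a := by linarith
    have hlog1 : Real.log (1+a) ≤ a := by
      have := Real.log_le_sub_one_of_pos h1a; linarith
    have hlog2 : -Real.log (1-a) ≤ a/(1-a) := by
      have h := Real.log_le_sub_one_of_pos (inv_pos.2 h2a)
      rw [Real.log_inv] at h
      have : (1-a)⁻¹ - 1 = a/(1-a) := by field_simp; ring
      linarith [this ▸ h]
    have harta : artanh a ≤ (1/2) * (a + a/(1-a)) := by
      rw [artanh_eq' (by linarith) (by linarith)]
      linarith
    have hkey : (1/2) * (a + a/(1-a)) < β * a := by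
      have haa : a ≤ (β-1)/(2*β-1) := min_le_left _ _
      have h5 : a * (2*β-1) ≤ β - 1 := (le_div_iff₀ h2β).1 haa
      have h6 : a/(1-a) < (2*β-1)*a := by
        rw [div_lt_iff₀ h2a]; nlinarith
      linarith
    linarith
  -- h m₀ > 0
  have hhm0 : 0 < artanh m₀ - β * m₀ := by
    have : artanh m₀ = β := my_artanh_tanh β
    rw [this]
    nlinarith [hm0.2, hβ0]
  -- IVT
  have hcont : ContinuousOn (fun x => artanh x - β * x) (Set.Icc a m₀) := by
    intro x hx
    have hx1 : -1 < x := by linarith [hx.1, ha0]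
    have hx2 : x < 1 := lt_of_le_of_lt hx.2 hm0.2
    exact (((hasDerivAt_artanh hx1 hx2).sub
      ((hasDerivAt_id x).const_mul β)).continuousAt).continuousWithinAt
  have hivt := intermediate_value_Ioo (le_of_lt ham) hcont
  have h0mem : (0:ℝ) ∈ Set.Ioo (artanh a - β * a) (artanh m₀ - β * m₀) := ⟨hha, hhm0⟩
  obtain ⟨m, hmIoo, hm0eq⟩ := hivt h0mem
  have hmIoo01 : m ∈ Set.Ioo (0:ℝ) 1 := ⟨lt_trans ha0 hmIoo.1, lt_trans hmIoo.2 hm0.2⟩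
  have hfixm : β * m = artanh m := by
    simp only at hm0eq; linarith [hm0eq]
  have hfixm' : Real.tanh (β * m) = m := (fixed_iff (by linarith [hmIoo01.1]) hmIoo01.2).2 hfixm
  refine ⟨m, ⟨hmIoo01, hfixm'⟩, ?_⟩
  -- uniqueness
  rintro b ⟨hb, hbfix⟩
  by_contra hne
  have hbfix' : β * b = artanh b := (fixed_iff (by linarith [hb.1]) hb.2).1 hbfix
  -- wlog via symmetric argument
  have key : ∀ x y : ℝ, x ∈ Set.Ioo (0:ℝ) 1 → y ∈ Set.Ioo (0:ℝ) 1 → x < y →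
      β * x = artanh x → β * y = artanh y → False := by
    intro x y hx hy hxy hfx hfy
    obtain ⟨c₁, hc₁, hc₁β⟩ := slope_eq_beta hx hfx
    obtain ⟨c₂, hc₂, hc₂β⟩ := artanh_slope hxy (by linarith [hx.1]) hy.2
    have hc₂β' : 1/(1-c₂^2) = β := by
      rw [hc₂β, ← hfx, ← hfy]
      rw [div_eq_iff (by linarith : y - x ≠ 0)]
      ring
    have h12 : c₁ < c₂ := lt_trans hc₁.2 hc₂.1
    have hp1 : (0:ℝ) < 1 - c₁^2 := by nlinarith [hc₁.1, hc₁.2, hx.2]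
    have hp2 : (0:ℝ) < 1 - c₂^2 := by nlinarith [hc₂.1, hc₂.2, hy.2, hc₁.1]
    have : 1/(1-c₁^2) < 1/(1-c₂^2) := by
      apply div_lt_div_of_pos_left one_pos hp2
      nlinarith [hc₁.1, h12]
    rw [hc₁β, hc₂β'] at this
    exact lt_irrefl β this
  rcases lt_or_gt_of_ne (Ne.symm hne) with h | h
  · exact key m b hmIoo01 hb h hfixm hbfix'
  · exact key b m hb hmIoo01 h hbfix' hfixm
end

section
/- Let I(x) = (1/2)⟨x, Γ²AΓ²x⟩ - Σ_{i=1}^k γ_i² L*(x_i) on [-1,1]^k, where Γ = diag(γ₁,...,γ_k), γ_i ∈ (0,1), and A is symmetric. Then I attains no global maximum on the boundary of [-1,1]^k. -/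
lemma Lstar_neg (u : ℝ) : Lstar (-u) = Lstar u := by
  unfold Lstar
  have h1 : (1 : ℝ) + -u = 1 - u := by ring
  have h2 : (1 : ℝ) - -u = 1 + u := by ring
  rw [h1, h2]; ring

lemma Lstar_one : Lstar 1 = Real.log 2 := by
  unfold Lstar
  norm_num

lemma Lstar_bound {ε : ℝ} (h0 : 0 < ε) (h1 : ε ≤ 1) :
    Real.log 2 - Lstar (1 - ε) ≥ -(1/2) * ε * Real.log ε := by
  unfold Lstar
  have e1 : (1 : ℝ) + (1 - ε) = 2 - ε := by ring
  have e2 : (1 : ℝ) - (1 - ε) = ε := by ring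
  rw [e1, e2]
  have hle : Real.log (2 - ε) ≤ Real.log 2 :=
    Real.log_le_log (by linarith) (by linarith)
  have hnn : 0 ≤ Real.log (2 - ε) := Real.log_nonneg (by linarith)
  have hmul : (2 - ε) * Real.log (2 - ε) ≤ 2 * Real.log 2 := by
    apply mul_le_mul (by linarith) hle hnn (by norm_num)
  nlinarith

open Matrix in
theorem stmt13 (k : ℕ) (A : Matrix (Fin k) (Fin k) ℝ) (hA : A.IsSymm)
    (γ : Fin k → ℝ) (hγ : ∀ i, γ i ∈ Set.Ioo (0 : ℝ) 1)
    (Γ2 : Matrix (Fin k) (Fin k) ℝ) (hΓ2 : Γ2 = Matrix.diagonal (fun i => γ i ^ 2))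
    (I : (Fin k → ℝ) → ℝ)
    (hI : I = fun x => (1 / 2) * (x ⬝ᵥ (Γ2 * A * Γ2).mulVec x)
      - ∑ i, γ i ^ 2 * Lstar (x i)) :
    ∀ x : Fin k → ℝ, (∀ i, x i ∈ Set.Icc (-1 : ℝ) 1) →
      (∃ i, x i = -1 ∨ x i = 1) →
      ¬ (∀ y : Fin k → ℝ, (∀ i, y i ∈ Set.Icc (-1 : ℝ) 1) → I y ≤ I x) := by
  intro x hx ⟨i, hxi⟩ h
  set M : Matrix (Fin k) (Fin k) ℝ := Γ2 * A * Γ2 with hM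
  -- symmetry of M
  have hMsymm : M.IsSymm := by
    rw [hM, Matrix.IsSymm, Matrix.transpose_mul, Matrix.transpose_mul, hΓ2,
      Matrix.diagonal_transpose, hA.eq]
    rw [← hΓ2, Matrix.mul_assoc]
  have hg : 0 < γ i ^ 2 := pow_pos (hγ i).1 2
  set g : ℝ := γ i ^ 2 with hgdef
  set C : ℝ := |(M.mulVec x) i| + |M i i| / 2 with hC
  have hC0 : 0 ≤ C := by positivity
  set ε : ℝ := Real.exp (-(2 * C / g + 1)) with hε
  have hε0 : 0 < ε := Real.exp_pos _
  have hε1 : ε < 1 := by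
    rw [hε, Real.exp_lt_one_iff]
    have : 0 ≤ 2 * C / g := by positivity
    linarith
  have hlogε : Real.log ε = -(2 * C / g + 1) := Real.log_exp _
  -- the perturbed point
  set s : ℝ := x i * (1 - ε) - x i with hs
  set y : Fin k → ℝ := Function.update x i (x i * (1 - ε)) with hy
  have hyx : y = x + Pi.single i s := by
    funext j
    by_cases hj : j = i
    · subst hj; simp [hy, hs]
    · simp [hy, hs, Function.update_of_ne hj, Pi.single_apply, hj]
  have hybox : ∀ j, y j ∈ Set.Icc (-1 : ℝ) 1 := by
    intro j
    by_cases hj : j = i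
    · subst hj
      simp only [hy, Function.update_self]
      rcases hxi with h' | h' <;> rw [h'] <;> constructor <;> nlinarith
    · simp only [hy, Function.update_of_ne hj]; exact hx j
  -- quadratic expansion
  have hquad : y ⬝ᵥ M.mulVec y = x ⬝ᵥ M.mulVec x + 2 * s * (M.mulVec x i) + s ^ 2 * M i i := by
    have hsymmdot : ∀ v : Fin k → ℝ, x ⬝ᵥ M.mulVec v = v ⬝ᵥ M.mulVec x := by
      intro v
      rw [Matrix.dotProduct_mulVec, ← Matrix.mulVec_transpose, hMsymm.eq,
        dotProduct_comm]
    rw [hyx, Matrix.mulVec_add, dotProduct_add, add_dotProduct,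
      add_dotProduct, hsymmdot (Pi.single i s)]
    simp only [single_dotProduct, Matrix.mulVec_single, Pi.smul_apply, op_smul_eq_mul,
      Matrix.col_apply]
    ring
  -- sum expansion
  have hsum : ∑ j, γ j ^ 2 * Lstar (y j) - ∑ j, γ j ^ 2 * Lstar (x j)
      = g * (Lstar (x i * (1 - ε)) - Lstar (x i)) := by
    rw [← Finset.sum_sub_distrib]
    rw [Finset.sum_eq_single i]
    · simp only [hy, Function.update_self]; ring
    · intro j _ hj
      simp only [hy, Function.update_of_ne hj]; ring
    · intro habs; exact absurd (Finset.mem_univ i) habs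
  -- Lstar values
  have hLx : Lstar (x i) = Real.log 2 := by
    rcases hxi with h' | h' <;> rw [h']
    · rw [show (-1 : ℝ) = -(1 : ℝ) by norm_num, Lstar_neg, Lstar_one]
    · exact Lstar_one
  have hLy : Lstar (x i * (1 - ε)) = Lstar (1 - ε) := by
    rcases hxi with h' | h' <;> rw [h']
    · rw [show (-1 : ℝ) * (1 - ε) = -(1 - ε) by ring, Lstar_neg]
    · rw [one_mul]
  -- difference of I
  have hdiff : I y - I x = s * (M.mulVec x i) + s ^ 2 / 2 * M i i
      + g * (Real.log 2 - Lstar (1 - ε)) := by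
    rw [hI]
    simp only
    rw [hquad]
    have h' := hsum
    rw [hLx, hLy] at h'
    linarith
  -- bounds on s
  have hs_sq : s ^ 2 = ε ^ 2 := by
    rcases hxi with h' | h' <;> rw [hs, h'] <;> ring
  have hs_abs : |s| = ε := by
    rcases hxi with h' | h' <;> rw [hs, h']
    · rw [show (-1 : ℝ) * (1 - ε) - -1 = ε by ring, abs_of_pos hε0]
    · rw [show (1 : ℝ) * (1 - ε) - 1 = -ε by ring, abs_neg, abs_of_pos hε0]
  have hb1 : s * (M.mulVec x i) ≥ -(ε * |M.mulVec x i|) := by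
    calc s * (M.mulVec x i) ≥ -|s * (M.mulVec x i)| := neg_abs_le _
    _ = -(ε * |M.mulVec x i|) := by rw [abs_mul, hs_abs]
  have hb2 : s ^ 2 / 2 * M i i ≥ -(ε / 2 * |M i i|) := by
    have h1 : s ^ 2 / 2 * M i i ≥ -(s ^ 2 / 2 * |M i i|) := by
      calc s ^ 2 / 2 * M i i ≥ -|s ^ 2 / 2 * M i i| := neg_abs_le _
      _ = -(s ^ 2 / 2 * |M i i|) := by
          rw [abs_mul, abs_of_nonneg (by positivity : (0:ℝ) ≤ s ^ 2 / 2)]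
    have h2 : s ^ 2 / 2 * |M i i| ≤ ε / 2 * |M i i| := by
      apply mul_le_mul_of_nonneg_right _ (abs_nonneg _)
      rw [hs_sq]; nlinarith
    linarith
  have hb3 : g * (Real.log 2 - Lstar (1 - ε)) ≥ ε * C + ε * g / 2 := by
    have hL := Lstar_bound hε0 (le_of_lt hε1)
    have h1 : g * (-(1/2) * ε * Real.log ε) ≤ g * (Real.log 2 - Lstar (1 - ε)) :=
      mul_le_mul_of_nonneg_left hL (le_of_lt hg)
    rw [hlogε] at h1
    have hgne : g ≠ 0 := ne_of_gt hg
    have h2 : g * (-(1/2) * ε * -(2 * C / g + 1)) = ε * C + ε * g / 2 := by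
      field_simp
    linarith
  have hCexp : ε * C = ε * |M.mulVec x i| + ε / 2 * |M i i| := by
    rw [hC]; ring
  have hεg : 0 < ε * g / 2 := by positivity
  have hlt : I x < I y := by
    clear_value y s ε C g M
    linarith
  exact absurd (h y hybox) (not_le.mpr hlt)
end
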